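/- arXiv:1903.09134 — 4 statements merged into one kernel-verified Lean document; each statement's English description precedes it below -/
import Mathlib

section
/- Let (K,v) be a henselian valued field, g ∈ K[x] monic and irreducible but inseparable, and π ∈ K* nonzero. Then the polynomial g_sep = g + πx has the same degree as g, is separable, and for any root β of g there exists a root α of g_sep with v(β − α) > ρ, provided v(π) > deg(g)·ρ − v(β). -/
open Polynomial

noncomputable section

variable {K L Γ : Type*} [Field K] [Field L] [Algebra K L] [IsAlgClosure K L]
  [AddCommGroup Γ] [LinearOrder Γ] [IsOrderedAddMonoid Γ]

/-- The degree of an algebraic element over `K`: the degree of its minimal polynomial. -/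
def degK (K : Type*) [Field K] {L : Type*} [Field L] [Algebra K L] (β : L) : ℕ :=
  (minpoly K β).natDegree

/-- The ring of integers of an additive valuation on a field, as a valuation subring.
A valued field `(K,v)` is henselian iff this local ring is henselian. -/
def AddValuation.integersVSR {Γ : Type*} [AddCommGroup Γ] [LinearOrder Γ] [IsOrderedAddMonoid Γ] {F : Type*} [Field F]
    (v : AddValuation F (WithTop Γ)) : ValuationSubring F where
  carrier := {x | 0 ≤ v x}
  mul_mem' := by
    intro a b ha hb
    show (0 : WithTop Γ) ≤ v (a * b)
    rw [v.map_mul]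
    calc (0 : WithTop Γ) = 0 + 0 := by simp
    _ ≤ v a + v b := add_le_add ha hb
  one_mem' := by simp [Set.mem_setOf_eq, v.map_one]
  add_mem' := by
    intro a b ha hb
    exact le_trans (le_min ha hb) (v.map_add a b)
  zero_mem' := by simp [Set.mem_setOf_eq, v.map_zero]
  neg_mem' := by
    intro a ha
    simpa [Set.mem_setOf_eq, v.map_neg] using ha
  mem_or_inv_mem' := by
    intro x
    rcases le_total 0 (v x) with h | h
    · exact Or.inl h
    · right
      show (0 : WithTop Γ) ≤ v x⁻¹
      rcases eq_or_ne x 0 with rfl | hx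
      · simp [v.map_zero]
      · by_contra h'
        push_neg at h'
        have h1 : v (x * x⁻¹) = v x + v x⁻¹ := v.map_mul x x⁻¹
        rw [mul_inv_cancel₀ hx, v.map_one] at h1
        have h2 : v x + v x⁻¹ ≤ 0 + v x⁻¹ := add_le_add_left h (v x⁻¹)
        rw [zero_add] at h2
        exact absurd (h1 ▸ h2) (not_le.mpr h')

lemma addval_multiset_sum {L Γ : Type*} [Field L] [AddCommGroup Γ] [LinearOrder Γ] [IsOrderedAddMonoid Γ]
    (w : AddValuation L (WithTop Γ)) (s : Multiset L) :
    w s.prod = (s.map w).sum := by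
  induction s using Multiset.induction with
  | empty => simp
  | cons a s ih => simp [w.map_mul, ih]

/-- perturbing an inseparable irreducible monic polynomial `g` to `g + π·X`. -/
theorem separable_perturbation (w : AddValuation L (WithTop Γ))
    [HenselianLocalRing (AddValuation.integersVSR (w.comap (algebraMap K L)))]
    (g : Polynomial K) (hg : g.Monic) (hgi : Irreducible g) (hgins : ¬ g.Separable)
    (π : K) (hπ : π ≠ 0) (ρ : Γ) (β : L) (hβ : (aeval β) g = 0)
    (hval : g.natDegree • (ρ : WithTop Γ) < w (algebraMap K L π) + w β) :
    (g + Polynomial.C π * Polynomial.X).natDegree = g.natDegree ∧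
      (g + Polynomial.C π * Polynomial.X).Separable ∧
      ∃ a ∈ (g + Polynomial.C π * Polynomial.X).aroots L, (ρ : WithTop Γ) < w (β - a) := by
  classical
  haveI : IsAlgClosed L := IsAlgClosure.isAlgClosed K
  set n := g.natDegree with hn
  have hg0 : g ≠ 0 := hg.ne_zero
  have hder : derivative g = 0 := by
    by_contra hd
    exact hgins ((separable_iff_derivative_ne_zero hgi).mpr hd)
  have hn1 : 0 < n := hgi.natDegree_pos
  have hn2 : 2 ≤ n := by
    by_contra hlt
    have hne1 : n = 1 := by omega
    have h0 : (derivative g).coeff 0 = 0 := by rw [hder]; simp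
    rw [coeff_derivative] at h0
    have hc1 : g.coeff 1 = 1 := by
      have := hg.coeff_natDegree
      rwa [← hn, hne1] at this
    simp [hc1] at h0
  have hdegCX : (C π * X : K[X]).degree = 1 := by
    exact degree_C_mul_X hπ
  have hdlt : (C π * X : K[X]).degree < g.degree := by
    rw [hdegCX, degree_eq_natDegree hg0, ← hn]
    exact_mod_cast by omega
  have hhd : (g + C π * X).natDegree = n := natDegree_add_eq_left_of_degree_lt hdlt
  have hhmonic : (g + C π * X).Monic := hg.add_of_left hdlt
  have hhder : derivative (g + C π * X) = C π := by
    rw [derivative_add, hder, zero_add, derivative_C_mul, derivative_X, mul_one]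
  have hsep : (g + C π * X).Separable := by
    rw [Polynomial.Separable, hhder]
    exact ⟨0, C π⁻¹, by rw [zero_mul, zero_add, ← C_mul, inv_mul_cancel₀ hπ, C_1]⟩
  refine ⟨hhd, hsep, ?_⟩
  set h := g + C π * X with hh
  set f := algebraMap K L
  have hmapmonic : (h.map f).Monic := hhmonic.map f
  have hcard : (h.aroots L).card = n := by
    have := (splits_iff_card_roots (f := h.map f)).mp (IsAlgClosed.splits (h.map f))
    rwa [natDegree_map, hhd] at this
  have hprod : ((h.aroots L).map fun a => X - C a).prod = h.map f :=
    prod_multiset_X_sub_C_of_monic_of_roots_card_eq hmapmonic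
      (by rw [hcard, natDegree_map, hhd])
  have heval : aeval β h = ((h.aroots L).map fun a => β - a).prod := by
    rw [aeval_def, ← eval_map, ← hprod, eval_multiset_prod, Multiset.map_map]
    congr 1
    ext a
    simp
  have hval2 : aeval β h = f π * β := by
    rw [hh, map_add, hβ, zero_add, map_mul, aeval_C, aeval_X]
  have hsum : ((h.aroots L).map fun a => w (β - a)).sum = w (f π) + w β := by
    have := addval_multiset_sum w ((h.aroots L).map fun a => β - a)
    rw [← heval, hval2, w.map_mul, Multiset.map_map] at this
    exact this.symm
  by_contra hcon
  push_neg at hcon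
  have hle : ((h.aroots L).map fun a => w (β - a)).sum ≤ n • (ρ : WithTop Γ) := by
    have := Multiset.sum_le_card_nsmul ((h.aroots L).map fun a => w (β - a))
      (ρ : WithTop Γ) (by
        intro x hx
        obtain ⟨a, ha, rfl⟩ := Multiset.mem_map.mp hx
        exact hcon a ha)
    rwa [Multiset.card_map, hcard] at this
  rw [hsum] at hle
  exact absurd hval (not_lt.mpr hle)
end
end

section
/- Let (K,v) be a henselian valued field and θ, α, β ∈ K̄ separable over K lying in a finite Galois extension M/K with group G. If (α,θ) is a distinguished pair with δ = v(θ−α), and v(θ−β) ≥ δ, then for every σ ∈ G, v(θ − σ(β)) ≥ v(θ − σ(α)); consequently v(g(θ))/deg(g) ≥ v(φ(θ))/deg(φ) where g, φ are the minimal polynomials of β, α over K. -/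
open Polynomial

noncomputable section

variable {K L Γ : Type*} [Field K] [Field L] [Algebra K L] [IsAlgClosure K L]
  [AddCommGroup Γ] [LinearOrder Γ] [IsOrderedAddMonoid Γ]

/-- `(α, θ)` is a distinguished pair of algebraic elements over `K`:
`deg_K α < deg_K θ`, `v(θ-α)` is the maximum of `Δ(θ) = {v(θ-β) : deg_K β < deg_K θ}`,
and elements of degree smaller than `deg_K α` give a strictly smaller value. -/
def IsDistinguishedPair (K : Type*) [Field K] {L Γ : Type*} [Field L] [Algebra K L]
    [AddCommGroup Γ] [LinearOrder Γ] [IsOrderedAddMonoid Γ] (w : AddValuation L (WithTop Γ)) (α θ : L) : Prop :=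
  degK K α < degK K θ ∧
  IsGreatest {x : WithTop Γ | ∃ β : L, degK K β < degK K θ ∧ x = w (θ - β)} (w (θ - α)) ∧
  ∀ β : L, degK K β < degK K α → w (θ - β) < w (θ - α)

section Helpers

variable {Γ : Type*} [AddCommGroup Γ] [LinearOrder Γ] [IsOrderedAddMonoid Γ]

lemma wt_nsmul_coe (n : ℕ) (a : Γ) : n • ((a : WithTop Γ)) = ((n • a : Γ) : WithTop Γ) := by
  induction n with
  | zero => simp
  | succ k ih => rw [succ_nsmul, succ_nsmul, ih, WithTop.coe_add]

lemma wt_nsmul_lt {n : ℕ} (hn : 0 < n) {x y : WithTop Γ} (h : x < y) : n • x < n • y := by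
  lift x to Γ using h.ne_top
  cases y with
  | top =>
    rw [wt_nsmul_coe]
    refine lt_of_lt_of_le (WithTop.coe_lt_top _) ?_
    rcases Nat.exists_eq_succ_of_ne_zero hn.ne' with ⟨k, rfl⟩
    rw [succ_nsmul, add_top]
  | coe y =>
    rw [wt_nsmul_coe, wt_nsmul_coe, WithTop.coe_lt_coe]
    have h' : x < y := WithTop.coe_lt_coe.mp h
    exact sub_pos.mp ((smul_sub n y x) ▸ nsmul_pos (sub_pos.mpr h') hn.ne')

lemma wt_nsmul_le_cancel {n : ℕ} (hn : 0 < n) {x y : WithTop Γ} (h : n • x ≤ n • y) : x ≤ y := by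
  by_contra hc
  exact absurd h (not_le.mpr (wt_nsmul_lt hn (not_le.mp hc)))

lemma wt_add_lt_add {a c : Γ} {x y : WithTop Γ} (h1 : (a : WithTop Γ) < x)
    (h2 : (c : WithTop Γ) ≤ y) : ((a + c : Γ) : WithTop Γ) < x + y := by
  cases x with
  | top => rw [top_add]; exact WithTop.coe_lt_top _
  | coe x =>
    cases y with
    | top => rw [add_top]; exact WithTop.coe_lt_top _
    | coe y =>
      rw [← WithTop.coe_add, WithTop.coe_lt_coe]
      exact add_lt_add_of_lt_of_le (WithTop.coe_lt_coe.mp h1) (WithTop.coe_le_coe.mp h2)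

lemma wt_sum_lt_of_forall_lt {s : Multiset (WithTop Γ)} {γ : Γ} (h : ∀ x ∈ s, (γ : WithTop Γ) < x)
    (hs : s ≠ 0) : (Multiset.card s) • (γ : WithTop Γ) < s.sum := by
  obtain ⟨a, ha⟩ := Multiset.exists_mem_of_ne_zero hs
  obtain ⟨t, rfl⟩ : ∃ t, s = a ::ₘ t := ⟨s.erase a, (Multiset.cons_erase ha).symm⟩
  rw [Multiset.sum_cons, Multiset.card_cons, succ_nsmul, add_comm (Multiset.card t • _)]
  have h2 : (Multiset.card t) • (γ : WithTop Γ) ≤ t.sum :=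
    Multiset.card_nsmul_le_sum fun x hx => (h x (Multiset.mem_cons_of_mem hx)).le
  rw [wt_nsmul_coe, ← WithTop.coe_add] at *
  exact wt_add_lt_add (h a (Multiset.mem_cons_self a t)) h2

end Helpers
section ValLemmas

variable {Γ : Type*} [AddCommGroup Γ] [LinearOrder Γ] [IsOrderedAddMonoid Γ] {F : Type*} [Field F]
variable (u : AddValuation F (WithTop Γ))

lemma dv_eq_top_iff {x : F} : u x = ⊤ ↔ x = 0 := by
  constructor
  · intro h
    by_contra hx
    have h1 : u (x * x⁻¹) = u x + u x⁻¹ := u.map_mul x x⁻¹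
    rw [mul_inv_cancel₀ hx, u.map_one, h, top_add] at h1
    exact (by simp : (0 : WithTop Γ) ≠ ⊤) h1
  · rintro rfl; exact u.map_zero

lemma dv_add_eq_left {x y : F} (h : u x < u y) : u (x + y) = u x := by
  refine le_antisymm ?_ (le_trans (le_min le_rfl h.le) (u.map_add x y))
  by_contra hc
  push_neg at hc
  have h2 : min (u (x + y)) (u (-y)) ≤ u (x + y + -y) := u.map_add _ _
  rw [add_neg_cancel_right, u.map_neg] at h2
  exact absurd h2 (not_le.mpr (lt_min hc h))

lemma dv_sum_lt {γ : WithTop Γ} (hγ : γ < ⊤) {s : Multiset F} (h : ∀ x ∈ s, γ < u x) :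
    γ < u s.sum := by
  induction s using Multiset.induction with
  | empty => rw [Multiset.sum_zero, u.map_zero]; exact hγ
  | cons a t ih =>
    rw [Multiset.sum_cons]
    refine lt_of_lt_of_le (lt_min (h a (Multiset.mem_cons_self a t))
      (ih fun x hx => h x (Multiset.mem_cons_of_mem hx))) (u.map_add _ _)

lemma dv_finset_sum_lt {γ : WithTop Γ} (hγ : γ < ⊤) {ι : Type*} {s : Finset ι} {f : ι → F}
    (h : ∀ i ∈ s, γ < u (f i)) : γ < u (∑ i ∈ s, f i) := by
  have : (∑ i ∈ s, f i) = (s.1.map f).sum := rfl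
  rw [this]
  exact dv_sum_lt u hγ (by
    intro x hx
    obtain ⟨i, hi, rfl⟩ := Multiset.mem_map.mp hx
    exact h i hi)

lemma dv_multiset_prod (s : Multiset F) : u s.prod = (s.map u).sum := by
  induction s using Multiset.induction with
  | empty => simpa using u.map_one
  | cons a t ih => rw [Multiset.prod_cons, Multiset.map_cons, Multiset.sum_cons, u.map_mul, ih]

lemma dv_finset_prod {ι : Type*} (s : Finset ι) (f : ι → F) :
    u (∏ i ∈ s, f i) = ∑ i ∈ s, u (f i) := by
  have h1 : (∏ i ∈ s, f i) = (s.1.map f).prod := rfl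
  have h2 : (∑ i ∈ s, u (f i)) = (s.1.map (fun i => u (f i))).sum := rfl
  rw [h1, h2, dv_multiset_prod, Multiset.map_map]
  rfl

lemma dv_natCast_nonneg (n : ℕ) : 0 ≤ u (n : F) := by
  induction n with
  | zero => rw [Nat.cast_zero, u.map_zero]; exact le_top
  | succ k ih =>
    rw [Nat.cast_succ]
    exact le_trans (le_min ih (le_of_eq u.map_one.symm)) (u.map_add _ _)

lemma dv_neg_one_pow (n : ℕ) : u ((-1 : F) ^ n) = 0 := by
  rw [u.map_pow, u.map_neg, u.map_one, smul_zero]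

lemma integersVSR_isUnit_iff (x : u.integersVSR) : IsUnit x ↔ u (x : F) = 0 := by
  constructor
  · rintro ⟨⟨a, b, hab, hba⟩, rfl⟩
    have h1 : ((a : F) * (b : F)) = 1 := by exact_mod_cast congrArg (Subtype.val) hab
    have h2 : u a + u b = 0 := by rw [← u.map_mul, h1, u.map_one]
    have ha : (0 : WithTop Γ) ≤ u a := a.2
    have hb : (0 : WithTop Γ) ≤ u b := b.2
    refine le_antisymm ?_ ha
    calc u (a : F) ≤ u a + u b := le_add_of_nonneg_right hb
    _ = 0 := h2
  · intro h
    have hx : (x : F) ≠ 0 := by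
      intro h0
      rw [h0, u.map_zero] at h
      simp at h
    have hxi : (0 : WithTop Γ) ≤ u (x : F)⁻¹ := by
      have h1 : u ((x : F) * (x : F)⁻¹) = u (x : F) + u (x : F)⁻¹ := u.map_mul _ _
      rw [mul_inv_cancel₀ hx, u.map_one, h, zero_add] at h1
      exact le_of_eq h1
    refine isUnit_iff_exists_inv.mpr ⟨⟨(x : F)⁻¹, hxi⟩, ?_⟩
    exact Subtype.ext (mul_inv_cancel₀ hx)

lemma integersVSR_mem_maximalIdeal_iff (x : u.integersVSR) :
    x ∈ IsLocalRing.maximalIdeal u.integersVSR ↔ 0 < u (x : F) := by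
  rw [IsLocalRing.mem_maximalIdeal, mem_nonunits_iff, integersVSR_isUnit_iff]
  constructor
  · intro h; exact lt_of_le_of_ne x.2 (Ne.symm h)
  · intro h; exact (ne_of_gt h)

end ValLemmas
section Hensel

lemma wt_add_lt_add' {Γ : Type*} [AddCommGroup Γ] [LinearOrder Γ] [IsOrderedAddMonoid Γ] {a c : Γ} {x y : WithTop Γ}
    (h1 : (a : WithTop Γ) ≤ x) (h2 : (c : WithTop Γ) < y) :
    ((a + c : Γ) : WithTop Γ) < x + y := by
  rw [add_comm a c, add_comm x y]; exact wt_add_lt_add h2 h1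

variable {K L Γ : Type*} [Field K] [Field L] [Algebra K L] [IsAlgClosure K L]
  [AddCommGroup Γ] [LinearOrder Γ] [IsOrderedAddMonoid Γ]

/-- Key Hensel consequence: if the minimal polynomial of `z` has a root in `L`
whose value is strictly smaller than the value of every other root (as a multiset),
then `z` has degree one over `K`. -/
lemma natDegree_eq_one_of_unique_min [DecidableEq L] (w : AddValuation L (WithTop Γ))
    [hens : HenselianLocalRing (AddValuation.integersVSR (w.comap (algebraMap K L)))]
    (z : L) {r₀ : L} (hr₀ : r₀ ∈ (minpoly K z).aroots L)
    (hmin : ∀ r ∈ ((minpoly K z).aroots L).erase r₀, w r₀ < w r) :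
    (minpoly K z).natDegree = 1 := by
  classical
  haveI : IsAlgClosed L := IsAlgClosure.isAlgClosed K
  haveI : Algebra.IsAlgebraic K L := IsAlgClosure.isAlgebraic
  set v : AddValuation K (WithTop Γ) := w.comap (algebraMap K L) with hv
  have hzint : IsIntegral K z := (Algebra.IsAlgebraic.isAlgebraic z).isIntegral
  set q : K[X] := minpoly K z with hq
  have hqmonic : q.Monic := minpoly.monic hzint
  set d := q.natDegree with hd
  have hdpos : 0 < d := minpoly.natDegree_pos hzint
  by_contra hne
  have hd2 : 2 ≤ d := by omega
  set R : Multiset L := q.aroots L with hR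
  have hsplits : Splits (q.map (algebraMap K L)) := IsAlgClosed.splits _
  have hsplits' : Splits (q.map (algebraMap K L)) := hsplits
  have hRroots : (q.map (algebraMap K L)).roots = R := rfl
  have hcard : Multiset.card R = d :=
    hsplits.natDegree_eq_card_roots.symm.trans (natDegree_map _)
  have hprod : q.map (algebraMap K L) = (R.map fun a => X - C a).prod := by
    rw [← hRroots]; exact hsplits'.eq_prod_roots_of_monic (hqmonic.map _)
  -- `r₀` has minimal value
  have hRne : R.erase r₀ ≠ 0 := by
    intro h0
    have hcons := congrArg Multiset.card (Multiset.cons_erase hr₀)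
    rw [h0, Multiset.card_cons, Multiset.card_zero, hcard] at hcons
    omega
  obtain ⟨r₁, hr₁⟩ := Multiset.exists_mem_of_ne_zero hRne
  have hwr₀top : w r₀ < ⊤ := lt_of_lt_of_le (hmin r₁ hr₁) le_top
  obtain ⟨γ, hγ⟩ := WithTop.ne_top_iff_exists.mp hwr₀top.ne
  -- value of the sum of roots
  have hsum : w R.sum = (γ : WithTop Γ) := by
    have h1 : R.sum = r₀ + (R.erase r₀).sum := by
      rw [← Multiset.sum_cons, Multiset.cons_erase hr₀]
    rw [h1, dv_add_eq_left w (dv_sum_lt w hwr₀top hmin), ← hγ]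
  set dd : K := -(q.coeff (d - 1)) with hdd
  have hcoeffd1 : algebraMap K L (q.coeff (d-1)) = - R.sum := by
    have hmone : (q.map (algebraMap K L)).Monic := hqmonic.map _
    have h1 : (q.map (algebraMap K L)).nextCoeff = - (q.map (algebraMap K L)).roots.sum :=
      hsplits'.nextCoeff_eq_neg_sum_roots_of_monic hmone
    have hnd : (q.map (algebraMap K L)).natDegree = d := natDegree_map _
    have h2 : (q.map (algebraMap K L)).nextCoeff = (q.map (algebraMap K L)).coeff (d - 1) := by
      rw [nextCoeff_of_natDegree_pos (by omega), hnd]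
    rw [h2, coeff_map, hRroots] at h1
    exact h1
  have hιdd : algebraMap K L dd = R.sum := by
    rw [hdd, map_neg, hcoeffd1, neg_neg]
  have hvdd : v dd = (γ : WithTop Γ) := by
    show w (algebraMap K L dd) = _
    rw [hιdd, hsum]
  have hddne : dd ≠ 0 := by
    intro h0
    rw [h0] at hvdd
    have h1 : v (0 : K) = ⊤ := v.map_zero
    rw [hvdd] at h1
    exact WithTop.coe_ne_top h1
  have hvddpow : ∀ k : ℕ, v (dd ^ k) = k • (γ : WithTop Γ) := by
    intro k
    show w (algebraMap K L (dd ^ k)) = _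
    rw [map_pow, w.map_pow, hιdd, hsum]
  -- coefficient bounds
  have hcoeff_bound : ∀ k, k + 2 ≤ d → ((d - k) • (γ : WithTop Γ)) < v (q.coeff k) := by
    intro k hk
    have hcoef : (q.map (algebraMap K L)).coeff k = (-1)^(d - k) * R.esymm (d - k) := by
      have h := Multiset.prod_X_sub_C_coeff R (k := k) (by rw [hcard]; omega)
      rw [← hprod] at h
      rw [h, hcard]
    have hwc : v (q.coeff k) = w (R.esymm (d-k)) := by
      show w (algebraMap K L (q.coeff k)) = _
      rw [← coeff_map, hcoef, w.map_mul, dv_neg_one_pow, zero_add]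
    rw [hwc, Multiset.esymm]
    set j := d - k with hj
    have hj2 : 2 ≤ j := by omega
    apply dv_sum_lt w (by rw [wt_nsmul_coe]; exact WithTop.coe_lt_top _)
    intro x hx
    obtain ⟨t, ht, rfl⟩ := Multiset.mem_map.mp hx
    obtain ⟨htle, htcard⟩ := Multiset.mem_powersetCard.mp ht
    rw [dv_multiset_prod]
    by_cases hmem : r₀ ∈ t
    · have h1 : t.map w = (w r₀) ::ₘ ((t.erase r₀).map w) := by
        rw [← Multiset.map_cons, Multiset.cons_erase hmem]
      rw [h1, Multiset.sum_cons]
      have hcard' : Multiset.card (t.erase r₀) = j - 1 := by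
        rw [Multiset.card_erase_of_mem hmem, htcard]
        exact Nat.pred_eq_sub_one
      have hlt : (((j-1) • γ : Γ) : WithTop Γ) < ((t.erase r₀).map w).sum := by
        have hall : ∀ x ∈ (t.erase r₀).map w, (γ : WithTop Γ) < x := by
          intro x hx
          obtain ⟨rr, hrr, rfl⟩ := Multiset.mem_map.mp hx
          exact hγ ▸ hmin rr (Multiset.mem_of_le (Multiset.erase_le_erase r₀ htle) hrr)
        have hne0 : (t.erase r₀).map w ≠ 0 := by
          intro h0
          have := congrArg Multiset.card h0
          rw [Multiset.card_map, hcard', Multiset.card_zero] at this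
          omega
        have h2 := wt_sum_lt_of_forall_lt hall hne0
        rwa [Multiset.card_map, hcard', wt_nsmul_coe] at h2
      have hkey := wt_add_lt_add' (le_of_eq hγ) hlt
      have hjγ : j • (γ : WithTop Γ) = ((γ + (j-1) • γ : Γ) : WithTop Γ) := by
        rw [wt_nsmul_coe]
        congr 1
        rw [add_comm, ← succ_nsmul]
        congr 1
        omega
      rw [hjγ]
      exact hkey
    · have hall : ∀ x ∈ t.map w, (γ : WithTop Γ) < x := by
        intro x hx
        obtain ⟨rr, hrr, rfl⟩ := Multiset.mem_map.mp hx
        have hrrR : rr ∈ R := Multiset.mem_of_le htle hrr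
        have hrrne : rr ≠ r₀ := fun h => hmem (h ▸ hrr)
        exact hγ ▸ hmin rr ((Multiset.mem_erase_of_ne hrrne).mpr hrrR)
      have hne0 : t.map w ≠ 0 := by
        intro h0
        have := congrArg Multiset.card h0
        rw [Multiset.card_map, htcard, Multiset.card_zero] at this
        omega
      have h2 := wt_sum_lt_of_forall_lt hall hne0
      rwa [Multiset.card_map, htcard] at h2
  -- the scaled coefficients
  set cK : ℕ → K := fun k => q.coeff k * dd^k * (dd^d)⁻¹ with hcK
  have hpow_ne : dd ^ d ≠ 0 := pow_ne_zero d hddne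
  have hcKd : cK d = 1 := by
    have h1 : q.coeff d = 1 := hqmonic.coeff_natDegree
    rw [hcK]
    simp only [h1, one_mul]
    exact mul_inv_cancel₀ hpow_ne
  have hcKd1 : cK (d-1) = -1 := by
    have h1 : q.coeff (d-1) = -dd := by rw [hdd, neg_neg]
    rw [hcK]
    simp only [h1]
    have h2 : dd * dd^(d-1) = dd^d := by
      rw [← pow_succ']
      congr 1
      omega
    rw [neg_mul, mul_comm dd (dd^(d-1)), ← neg_mul, neg_mul, mul_comm (dd^(d-1)) dd, h2,
      neg_mul, mul_inv_cancel₀ hpow_ne]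
  have hvcK_pos : ∀ k, k + 2 ≤ d → 0 < v (cK k) := by
    intro k hk
    have h1 : cK k * dd^d = q.coeff k * dd^k := by
      rw [hcK]
      field_simp
    have h2 : v (cK k) + v (dd^d) = v (q.coeff k) + v (dd^k) := by
      rw [← v.map_mul, ← v.map_mul, h1]
    have h3 : (d • (γ : WithTop Γ)) < v (q.coeff k) + v (dd^k) := by
      rw [hvddpow k]
      have h4 := hcoeff_bound k hk
      have h5 : d • (γ : WithTop Γ) = ((d - k) • (γ : WithTop Γ)) + (k • (γ : WithTop Γ)) := by
        rw [wt_nsmul_coe, wt_nsmul_coe, wt_nsmul_coe, ← WithTop.coe_add, ← add_nsmul]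
        congr 2
        omega
      rw [h5]
      exact WithTop.add_lt_add_right (by rw [wt_nsmul_coe]; exact WithTop.coe_ne_top) h4
    rw [← h2, hvddpow d] at h3
    have h6 : (0 : WithTop Γ) + d • (γ : WithTop Γ) < v (cK k) + d • (γ : WithTop Γ) := by
      rwa [zero_add]
    exact (WithTop.add_lt_add_iff_right
      (by rw [wt_nsmul_coe]; exact WithTop.coe_ne_top)).mp h6
  have hvcK_nonneg : ∀ k, 0 ≤ v (cK k) := by
    intro k
    by_cases hk1 : d < k
    · have h0 : q.coeff k = 0 := coeff_eq_zero_of_natDegree_lt hk1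
      rw [hcK]
      simp only [h0, zero_mul]
      rw [v.map_zero]
      exact le_top
    by_cases hk2 : k = d
    · rw [hk2, hcKd, v.map_one]
    by_cases hk3 : k = d - 1
    · rw [hk3, hcKd1, show (-1 : K) = -(1:K) from rfl, v.map_neg, v.map_one]
    · exact (hvcK_pos k (by omega)).le
  -- the integral polynomial
  set V : ValuationSubring K := AddValuation.integersVSR v with hV
  have hmemV : ∀ k, cK k ∈ V := fun k => hvcK_nonneg k
  set fO : Polynomial V := X^d + ∑ k ∈ Finset.range d, C (⟨cK k, hmemV k⟩ : V) * X^k with hfO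
  have hfOmonic : fO.Monic := by
    refine monic_X_pow_add ?_
    refine lt_of_le_of_lt (degree_sum_le _ _) ?_
    rw [Finset.sup_lt_iff (by exact WithBot.bot_lt_coe d)]
    intro k hk
    refine lt_of_le_of_lt (degree_C_mul_X_pow_le _ _) ?_
    exact_mod_cast Finset.mem_range.mp hk
  set fK : Polynomial K := X^d + ∑ k ∈ Finset.range d, C (cK k) * X^k with hfK
  have hmap : fO.map V.subtype = fK := by
    rw [hfO, hfK, Polynomial.map_add, Polynomial.map_pow, Polynomial.map_X, Polynomial.map_sum]
    congr 1
    refine Finset.sum_congr rfl fun k _ => ?_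
    rw [Polynomial.map_mul, Polynomial.map_C, Polynomial.map_pow, Polynomial.map_X]
    rfl
  have hVeval : ∀ x : V, ((fO.eval x : V) : K) = fK.eval (x : K) := by
    intro x
    rw [← hmap, eval_map]
    exact (eval₂_at_apply V.subtype x).symm
  have hevalK : ∀ y : K, fK.eval y = y^d + ∑ k ∈ Finset.range d, cK k * y^k := by
    intro y
    rw [hfK, eval_add, eval_pow, eval_X, eval_finset_sum]
    congr 1
    refine Finset.sum_congr rfl fun k _ => ?_
    rw [eval_mul, eval_C, eval_pow, eval_X]
  have hqdd : ∀ y : K, q.eval (dd * y) = fK.eval y * dd^d := by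
    intro y
    rw [hevalK, add_mul, Finset.sum_mul]
    have hEq : q.eval (dd*y) = ∑ k ∈ Finset.range (d+1), q.coeff k * (dd*y)^k := by
      have h := eval_eq_sum_range (p := q) (dd*y)
      rwa [← hd] at h
    have hcd : q.coeff d = 1 := by rw [hd]; exact hqmonic.coeff_natDegree
    have hterm : ∀ k ∈ Finset.range d, q.coeff k * (dd*y)^k = cK k * y^k * dd^d := by
      intro k _
      show q.coeff k * (dd*y)^k = q.coeff k * dd ^ k * (dd ^ d)⁻¹ * y^k * dd^d
      rw [mul_pow]
      field_simp
    rw [hEq, Finset.sum_range_succ, hcd, Finset.sum_congr rfl hterm, mul_pow, one_mul]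
    ring
  -- Hensel's hypotheses at 1
  have heval1 : fK.eval 1 = ∑ k ∈ Finset.range (d-1), cK k := by
    rw [hevalK, one_pow]
    have hsplit : Finset.range d = Finset.range ((d-1)+1) := by congr 1; omega
    rw [hsplit, Finset.sum_range_succ, hcKd1]
    simp only [one_pow, mul_one]
    ring
  have h1mem : fO.eval 1 ∈ IsLocalRing.maximalIdeal V := by
    rw [integersVSR_mem_maximalIdeal_iff]
    have hco : ((fO.eval 1 : V) : K) = fK.eval 1 := by
      have h := hVeval 1
      rwa [OneMemClass.coe_one] at h
    rw [hco, heval1]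
    refine dv_finset_sum_lt v (by simp) fun k hk => ?_
    exact hvcK_pos k (by have := Finset.mem_range.mp hk; omega)
  have hderK : fK.derivative.eval 1 = (d : K) + ∑ k ∈ Finset.range d, cK k * k := by
    rw [hfK, derivative_add, derivative_X_pow, derivative_sum, eval_add, eval_mul, eval_C,
      eval_pow, eval_X, one_pow, mul_one, eval_finset_sum]
    congr 1
    refine Finset.sum_congr rfl fun k _ => ?_
    rw [derivative_C_mul_X_pow, eval_mul, eval_C, eval_pow, eval_X, one_pow, mul_one]
  have hder1 : fK.derivative.eval 1 = 1 + ∑ k ∈ Finset.range (d-1), cK k * k := by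
    rw [hderK]
    have hsplit : Finset.range d = Finset.range ((d-1)+1) := by congr 1; omega
    rw [hsplit, Finset.sum_range_succ, hcKd1]
    have hcast : ((d - 1 : ℕ) : K) = (d : K) - 1 := by
      rw [Nat.cast_sub (by omega), Nat.cast_one]
    rw [hcast]
    ring
  have hderunit : IsUnit (fO.derivative.eval 1) := by
    rw [integersVSR_isUnit_iff]
    have hco : ((fO.derivative.eval 1 : V) : K) = fK.derivative.eval 1 := by
      have h1 : fK.derivative = (fO.derivative).map V.subtype := by
        rw [← hmap, derivative_map]
      rw [h1, eval_map]
      have := (eval₂_at_apply (p := fO.derivative) V.subtype 1)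
      rw [map_one] at this
      rw [this]
      rfl
    show v ((fO.derivative.eval 1 : V) : K) = 0
    rw [hco, hder1]
    have hsmall : (0 : WithTop Γ) < v (∑ k ∈ Finset.range (d-1), cK k * k) := by
      refine dv_finset_sum_lt v (by simp) fun k hk => ?_
      rw [v.map_mul]
      have h1 : (0 : WithTop Γ) < v (cK k) :=
        hvcK_pos k (by have := Finset.mem_range.mp hk; omega)
      have h2 : (0 : WithTop Γ) ≤ v ((k : K)) := dv_natCast_nonneg v k
      exact lt_of_lt_of_le h1 (le_add_of_nonneg_right h2)
    rw [dv_add_eq_left v (by rw [v.map_one]; exact hsmall), v.map_one]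
  obtain ⟨aV, haroot, -⟩ := HenselianLocalRing.is_henselian fO hfOmonic 1 h1mem hderunit
  have h0 : fK.eval ((aV : K)) = 0 := by
    rw [← hVeval aV, haroot, ZeroMemClass.coe_zero]
  have hroot : q.IsRoot (dd * (aV : K)) := by
    show q.eval _ = 0
    rw [hqdd, h0, zero_mul]
  have hdeg1 : q.degree = 1 :=
    degree_eq_one_of_irreducible_of_root (minpoly.irreducible hzint) hroot
  have : d = 1 := natDegree_eq_of_degree_eq_some hdeg1
  omega

end Hensel
section ConjEq

variable {K L Γ : Type*} [Field K] [Field L] [Algebra K L] [IsAlgClosure K L]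
  [AddCommGroup Γ] [LinearOrder Γ] [IsOrderedAddMonoid Γ]

/-- In a henselian situation, all roots of the (separable) minimal polynomial of an
element have the same value. -/
lemma w_conj_eq (w : AddValuation L (WithTop Γ))
    [hens : HenselianLocalRing (AddValuation.integersVSR (w.comap (algebraMap K L)))]
    {x : L} (hsep : (minpoly K x).Separable) {r : L} (hr : r ∈ (minpoly K x).aroots L) :
    w r = w x := by
  classical
  haveI : IsAlgClosed L := IsAlgClosure.isAlgClosed K
  haveI : Algebra.IsAlgebraic K L := IsAlgClosure.isAlgebraic
  have hxint : IsIntegral K x := (Algebra.IsAlgebraic.isAlgebraic x).isIntegral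
  by_cases hx0 : x = 0
  · subst hx0
    rw [minpoly.zero] at hr
    have : r ∈ (X : L[X]).roots := by
      rwa [aroots_def, Polynomial.map_X] at hr
    rw [roots_X, Multiset.mem_singleton] at this
    rw [this]
  set p : K[X] := minpoly K x with hp
  set R : Multiset L := p.aroots L with hR
  have hpne : p ≠ 0 := minpoly.ne_zero hxint
  have hRx : x ∈ R := by
    rw [hR, mem_aroots]
    exact ⟨hpne, minpoly.aeval K x⟩
  have hminr : ∀ s ∈ R, minpoly K s = p := by
    intro s hs
    rw [hR, mem_aroots] at hs
    exact (minpoly.eq_of_irreducible_of_monic (minpoly.irreducible hxint) hs.2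
      (minpoly.monic hxint)).symm
  have hnodup : R.Nodup := nodup_roots (hsep.map (f := algebraMap K L))
  have hzero : (0 : L) ∉ R := by
    intro h0
    rw [hR, mem_aroots] at h0
    have hc0 : p.coeff 0 = 0 := by
      have h1 : aeval (0 : L) p = algebraMap K L (p.coeff 0) := by
        rw [aeval_def, eval₂_at_zero]
      rw [h0.2] at h1
      exact (RingHom.injective (algebraMap K L)) (by rw [← h1, map_zero])
    have hroot : p.IsRoot 0 := by
      rw [IsRoot, ← coeff_zero_eq_eval_zero, hc0]
    have hdeg1 : p.degree = 1 :=
      degree_eq_one_of_irreducible_of_root (minpoly.irreducible hxint) hroot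
    have hpX : p = X := by
      have h2 := (minpoly.monic hxint).eq_X_add_C (natDegree_eq_of_degree_eq_some hdeg1)
      rw [hc0, map_zero, add_zero] at h2
      exact h2
    have h3 := minpoly.aeval K x
    rw [← hp, hpX, aeval_X] at h3
    exact hx0 h3
  -- the key claim
  have key : ∀ s ∈ R, ∀ s' ∈ R, w s ≤ w s' := by
    by_contra hcon
    push_neg at hcon
    obtain ⟨s, hsR, s', hs'R, hlt⟩ := hcon
    set Rf : Finset L := R.toFinset with hRf
    have hmemRf : ∀ {t : L}, t ∈ Rf ↔ t ∈ R := fun {t} => Multiset.mem_toFinset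
    set Wf : Finset (WithTop Γ) := Rf.image w with hWf
    have hWfne : Wf.Nonempty := ⟨w x, Finset.mem_image_of_mem w (hmemRf.mpr hRx)⟩
    set γtop : WithTop Γ := Wf.min' hWfne with hγtop
    obtain ⟨s₀, hs₀Rf, hs₀γ⟩ := Finset.mem_image.mp (Wf.min'_mem hWfne)
    rw [← hγtop] at hs₀γ
    have hγne : γtop ≠ ⊤ := by
      rw [← hs₀γ]
      intro htop
      exact hzero (((dv_eq_top_iff w).mp htop) ▸ hmemRf.mp hs₀Rf)
    obtain ⟨γ, hγ⟩ := WithTop.ne_top_iff_exists.mp hγne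
    have hγle : ∀ t ∈ Rf, γtop ≤ w t := fun t ht =>
      Wf.min'_le _ (Finset.mem_image_of_mem w ht)
    set Sf : Finset L := Rf.filter (fun t => w t = γtop) with hSf
    have hs₀Sf : s₀ ∈ Sf := Finset.mem_filter.mpr ⟨hs₀Rf, hs₀γ⟩
    have hSfcard : 0 < Sf.card := Finset.card_pos.mpr ⟨s₀, hs₀Sf⟩
    set u : L := ∏ t ∈ Sf, t with hu
    have hwu : w u = Sf.card • γtop := by
      rw [hu, dv_finset_prod]
      rw [Finset.sum_congr rfl (fun t ht => (Finset.mem_filter.mp ht).2), Finset.sum_const]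
    -- the dichotomy
    have hdich : ∀ τ : L ≃ₐ[K] L, Sf.image τ = Sf ∨ w u < w (τ u) := by
      intro τ
      by_cases him : Sf.image τ = Sf
      · exact Or.inl him
      right
      have hmapRf : ∀ t ∈ Rf, τ t ∈ Rf := by
        intro t ht
        rw [hmemRf] at ht ⊢
        rw [hR, mem_aroots] at ht ⊢
        refine ⟨ht.1, ?_⟩
        rw [aeval_algHom_apply τ t p, ht.2, map_zero]
      have himsub : Sf.image τ ⊆ Rf := by
        intro t ht
        obtain ⟨t', ht', rfl⟩ := Finset.mem_image.mp ht
        exact hmapRf t' (Finset.filter_subset _ _ ht')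
      have hcards : (Sf.image τ).card = Sf.card := Finset.card_image_of_injective Sf τ.injective
      have hexists : ∃ t', t' ∈ Sf.image τ ∧ t' ∉ Sf := by
        by_contra hgone
        push_neg at hgone
        exact him (Finset.eq_of_subset_of_card_le (fun t ht => hgone t ht) (by rw [hcards]))
      obtain ⟨t', ht'img, ht'not⟩ := hexists
      have hprodim : (∏ t ∈ Sf.image τ, t) = ∏ t ∈ Sf, τ t :=
        Finset.prod_image (fun a _ b _ h => τ.injective h)
      have hτu : w (τ u) = ∑ t ∈ Sf.image τ, w t := by
        rw [hu, map_prod, ← hprodim, dv_finset_prod]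
      rw [hτu, hwu, ← Finset.add_sum_erase _ _ ht'img]
      have h1 : (γ : WithTop Γ) < w t' := by
        refine lt_of_le_of_ne (hγ ▸ hγle t' (himsub ht'img)) ?_
        intro heq
        exact ht'not (Finset.mem_filter.mpr ⟨himsub ht'img, by rw [← heq, hγ]⟩)
      have h2 : (((Sf.card - 1) • γ : Γ) : WithTop Γ) ≤ ∑ t ∈ (Sf.image τ).erase t', w t := by
        have h3 := Finset.card_nsmul_le_sum ((Sf.image τ).erase t') w (γ : WithTop Γ)
          (fun t ht => hγ ▸ hγle t (himsub (Finset.erase_subset _ _ ht)))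
        rwa [Finset.card_erase_of_mem ht'img, hcards, wt_nsmul_coe] at h3
      have h4 := wt_add_lt_add h1 h2
      have h5 : Sf.card • γtop = ((γ + (Sf.card - 1) • γ : Γ) : WithTop Γ) := by
        rw [← hγ, wt_nsmul_coe]
        congr 1
        rw [add_comm, ← succ_nsmul]
        congr 1
        omega
      rw [h5]
      exact h4
    -- u is fixed by all automorphisms
    have huint : IsIntegral K u := (Algebra.IsAlgebraic.isAlgebraic u).isIntegral
    have husep : (minpoly K u).Separable := by
      have humem : u ∈ separableClosure K L := by
        refine IntermediateField.prod_mem _ fun t ht => ?_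
        rw [mem_separableClosure_iff]
        show (minpoly K t).Separable
        rw [hminr t (hmemRf.mp (Finset.filter_subset _ _ ht))]
        exact hsep
      exact mem_separableClosure_iff.mp humem
    have hudeg : (minpoly K u).natDegree = 1 := by
      have humem : u ∈ (minpoly K u).aroots L :=
        (mem_aroots).mpr ⟨minpoly.ne_zero huint, minpoly.aeval K u⟩
      refine natDegree_eq_one_of_unique_min w u humem ?_
      intro r' hr'
      have hnodupU : ((minpoly K u).aroots L).Nodup := nodup_roots (husep.map (f := algebraMap K L))
      obtain ⟨hr'ne, hr'mem⟩ := (hnodupU.mem_erase_iff).mp hr'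
      obtain ⟨τ, hτ⟩ := minpoly.exists_algEquiv_of_root'
        (Algebra.IsAlgebraic.isAlgebraic u) ((mem_aroots.mp hr'mem).2)
      rcases hdich τ with him | hlt2
      · exfalso
        apply hr'ne
        have hprodim : (∏ t ∈ Sf.image τ, t) = ∏ t ∈ Sf, τ t :=
          Finset.prod_image (fun a _ b _ h => τ.injective h)
        rw [← hτ, hu, map_prod, ← hprodim, him]
      · rw [← hτ]
        exact hlt2
    obtain ⟨c, hc⟩ : ∃ c : K, algebraMap K L c = u := by
      have h2 := (minpoly.monic huint).eq_X_add_C hudeg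
      refine ⟨-((minpoly K u).coeff 0), ?_⟩
      have haev := minpoly.aeval K u
      rw [h2, map_add, aeval_X, aeval_C] at haev
      rw [map_neg]
      linear_combination -haev
    have hτall : ∀ τ : L ≃ₐ[K] L, Sf.image τ = Sf := by
      intro τ
      rcases hdich τ with him | hlt2
      · exact him
      · exfalso
        rw [← hc, AlgEquiv.commutes, hc] at hlt2
        exact lt_irrefl _ hlt2
    -- transitivity contradiction
    have hsnot : s ∉ Sf := by
      intro hmem
      have h6 : w s = γtop := (Finset.mem_filter.mp hmem).2
      have h7 : γtop ≤ w s' := hγle s' (hmemRf.mpr hs'R)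
      rw [h6] at hlt
      exact absurd hlt (not_lt.mpr h7)
    obtain ⟨τ, hτ⟩ := minpoly.exists_algEquiv_of_root'
      (Algebra.IsAlgebraic.isAlgebraic s₀)
      (by rw [hminr s₀ (hmemRf.mp hs₀Rf)]; exact (mem_aroots.mp (hR ▸ hsR)).2)
    apply hsnot
    rw [← hτall τ]
    exact hτ ▸ Finset.mem_image_of_mem τ hs₀Sf
  exact le_antisymm (key r (hR ▸ hr) x hRx) (key x hRx r (hR ▸ hr))

end ConjEq
section Invariance

variable {K L Γ : Type*} [Field K] [Field L] [Algebra K L] [IsAlgClosure K L]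
  [AddCommGroup Γ] [LinearOrder Γ] [IsOrderedAddMonoid Γ]

/-- Galois invariance of the value on a henselian field. -/
lemma w_galois_invariant (w : AddValuation L (WithTop Γ))
    [hens : HenselianLocalRing (AddValuation.integersVSR (w.comap (algebraMap K L)))]
    (M : IntermediateField K L) [IsGalois K M] (σ : M ≃ₐ[K] M) (z : M) :
    w ((σ z : M) : L) = w (z : L) := by
  classical
  haveI : Algebra.IsAlgebraic K L := IsAlgClosure.isAlgebraic
  have hminz : minpoly K ((z : M) : L) = minpoly K z :=
    minpoly.algebraMap_eq (algebraMap M L).injective z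
  have hzsep : (minpoly K (z : L)).Separable := by
    rw [hminz]
    exact Algebra.IsSeparable.isSeparable K z
  have hzint : IsIntegral K ((z : M) : L) :=
    (Algebra.IsAlgebraic.isAlgebraic _).isIntegral
  have hrootmem : ((σ z : M) : L) ∈ (minpoly K (z : L)).aroots L := by
    rw [mem_aroots]
    refine ⟨minpoly.ne_zero hzint, ?_⟩
    rw [hminz]
    have h2 : aeval (σ z) (minpoly K z) = 0 := by
      rw [aeval_algHom_apply σ z, minpoly.aeval, map_zero]
    have h3 := aeval_algebraMap_apply L (σ z) (minpoly K z)
    rw [h2, map_zero] at h3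
    exact h3
  exact w_conj_eq w hzsep hrootmem

/-- Summing values of `θ - σ(c)` over the Galois group computes a multiple of the
value of the minimal polynomial of `c` evaluated at `θ`. -/
lemma sum_w_conj (w : AddValuation L (WithTop Γ))
    [hens : HenselianLocalRing (AddValuation.integersVSR (w.comap (algebraMap K L)))]
    (M : IntermediateField K L) [FiniteDimensional K M] [IsGalois K M] (θ : L) (c : M) :
    ∃ s : ℕ, 0 < s ∧ s * (minpoly K (c : L)).natDegree = Fintype.card (M ≃ₐ[K] M) ∧
      (∑ σ : M ≃ₐ[K] M, w (θ - ((σ c : M) : L))) = s • w ((aeval θ) (minpoly K (c : L))) := by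
  classical
  haveI : IsAlgClosed L := IsAlgClosure.isAlgClosed K
  haveI : Algebra.IsAlgebraic K L := IsAlgClosure.isAlgebraic
  set p : K[X] := minpoly K (c : L) with hp
  have hpc : p = minpoly K c := minpoly.algebraMap_eq (algebraMap M L).injective c
  have hcint : IsIntegral K ((c : M) : L) := (Algebra.IsAlgebraic.isAlgebraic _).isIntegral
  have hsep : p.Separable := by rw [hpc]; exact Algebra.IsSeparable.isSeparable K c
  set R : Multiset L := p.aroots L with hR
  have hnodup : R.Nodup := nodup_roots (hsep.map (f := algebraMap K L))
  set g : (M ≃ₐ[K] M) → L := fun σ => ((σ c : M) : L) with hg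
  have hgroot : ∀ σ : M ≃ₐ[K] M, g σ ∈ R := by
    intro σ
    rw [hR, mem_aroots]
    refine ⟨minpoly.ne_zero hcint, ?_⟩
    rw [hpc]
    have h2 : aeval (σ c) (minpoly K c) = 0 := by
      rw [aeval_algHom_apply σ c, minpoly.aeval, map_zero]
    have h3 := aeval_algebraMap_apply L (σ c) (minpoly K c)
    rw [h2, map_zero] at h3
    exact h3
  have honto : ∀ r ∈ R, ∃ σ : M ≃ₐ[K] M, g σ = r := by
    intro r hrR
    obtain ⟨τ, hτ⟩ := minpoly.exists_algEquiv_of_root'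
      (Algebra.IsAlgebraic.isAlgebraic ((c : M) : L)) ((mem_aroots.mp (hR ▸ hrR)).2)
    refine ⟨τ.restrictNormal M, ?_⟩
    have hcomm := AlgEquiv.restrictNormal_commutes τ M c
    show ((algebraMap M L) ((τ.restrictNormal M) c)) = r
    rw [hcomm]
    exact hτ
  set Of : Finset L := Finset.univ.image g with hOf
  have hROf : R.toFinset = Of := by
    ext r
    rw [Multiset.mem_toFinset, hOf, Finset.mem_image]
    constructor
    · intro hrR
      obtain ⟨σ, hσ⟩ := honto r hrR
      exact ⟨σ, Finset.mem_univ σ, hσ⟩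
    · rintro ⟨σ, -, rfl⟩
      exact hgroot σ
  have hcardOf : Of.card = p.natDegree := by
    rw [← hROf, Multiset.toFinset_card_of_nodup hnodup]
    exact ((IsAlgClosed.splits (p.map (algebraMap K L))).natDegree_eq_card_roots.symm.trans
      (natDegree_map _))
  set s : ℕ := (Finset.univ.filter (fun σ : M ≃ₐ[K] M => g σ = (c : L))).card with hs
  have hspos : 0 < s := by
    refine Finset.card_pos.mpr ⟨1, Finset.mem_filter.mpr ⟨Finset.mem_univ _, ?_⟩⟩
    show ((algebraMap M L) ((1 : M ≃ₐ[K] M) c)) = (c : L)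
    rw [AlgEquiv.one_apply]
    rfl
  have hfiber : ∀ b ∈ Of, (Finset.univ.filter (fun σ => g σ = b)).card = s := by
    intro b hb
    obtain ⟨τ₀, -, rfl⟩ := Finset.mem_image.mp hb
    rw [hs]
    refine Finset.card_bij (fun σ _ => τ₀⁻¹ * σ) ?_ ?_ ?_
    · intro σ hσ
      have hσ' : g σ = g τ₀ := (Finset.mem_filter.mp hσ).2
      have hσc : σ c = τ₀ c := by
        apply_fun (algebraMap M L) using (algebraMap M L).injective
        exact hσ'
      refine Finset.mem_filter.mpr ⟨Finset.mem_univ _, ?_⟩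
      show ((algebraMap M L) ((τ₀⁻¹ * σ) c)) = (c : L)
      have : (τ₀⁻¹ * σ) c = τ₀.symm (σ c) := rfl
      rw [this, hσc, AlgEquiv.symm_apply_apply]
      rfl
    · intro σ₁ _ σ₂ _ h
      exact mul_left_cancel h
    · intro σ' hσ'
      have hσc : σ' c = c := by
        apply_fun (algebraMap M L) using (algebraMap M L).injective
        exact (Finset.mem_filter.mp hσ').2
      refine ⟨τ₀ * σ', Finset.mem_filter.mpr ⟨Finset.mem_univ _, ?_⟩, by group⟩
      show ((algebraMap M L) ((τ₀ * σ') c)) = g τ₀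
      have : (τ₀ * σ') c = τ₀ (σ' c) := rfl
      rw [this, hσc]
      rfl
  have hcardG : Fintype.card (M ≃ₐ[K] M) = Of.card * s := by
    have h1 := Finset.card_eq_sum_card_fiberwise
      (fun σ (_ : σ ∈ Finset.univ) => Finset.mem_image_of_mem g (Finset.mem_univ σ))
    rw [Finset.card_univ] at h1
    rw [h1, Finset.sum_congr rfl hfiber, Finset.sum_const, smul_eq_mul]
  have hsum1 : (∑ σ : M ≃ₐ[K] M, w (θ - g σ)) = ∑ b ∈ Of, s • w (θ - b) := by
    rw [Finset.sum_comp (fun b => w (θ - b)) g]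
    exact Finset.sum_congr rfl fun b hb => by rw [hfiber b hb]
  have haev : w (aeval θ p) = ∑ b ∈ Of, w (θ - b) := by
    have hsplits' := IsAlgClosed.splits (p.map (algebraMap K L))
    have hprod : p.map (algebraMap K L) = (R.map fun a => X - C a).prod :=
      hsplits'.eq_prod_roots_of_monic ((minpoly.monic hcint).map _)
    have h2 : aeval θ p = eval θ (p.map (algebraMap K L)) := by rw [aeval_def, eval_map]
    rw [h2, hprod, eval_multiset_prod, Multiset.map_map, dv_multiset_prod, Multiset.map_map]
    have hval : Of.val = R := by rw [← hROf, ← Multiset.toFinset_eq hnodup]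
    have h3 : (∑ b ∈ Of, w (θ - b)) = (Of.val.map fun b => w (θ - b)).sum := rfl
    rw [h3, hval]
    congr 1
    refine Multiset.map_congr rfl fun b _ => ?_
    show w (eval θ (X - C b)) = w (θ - b)
    rw [eval_sub, eval_X, eval_C]
  refine ⟨s, hspos, ?_, ?_⟩
  · rw [hcardG, hcardOf, mul_comm]
  · calc (∑ σ : M ≃ₐ[K] M, w (θ - ((σ c : M) : L))) = ∑ b ∈ Of, s • w (θ - b) := hsum1
    _ = s • ∑ b ∈ Of, w (θ - b) := (Finset.smul_sum).symm
    _ = s • w (aeval θ p) := by rw [haev]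

end Invariance
/-- comparison of values at Galois conjugates for a distinguished pair. -/
theorem conjugate_value_comparison (w : AddValuation L (WithTop Γ))
    [HenselianLocalRing (AddValuation.integersVSR (w.comap (algebraMap K L)))]
    (M : IntermediateField K L) [FiniteDimensional K M] [IsGalois K M]
    (θ a β : L) (hθM : θ ∈ M) (haM : a ∈ M) (hβM : β ∈ M)
    (hθs : (minpoly K θ).Separable) (has : (minpoly K a).Separable)
    (hβs : (minpoly K β).Separable)
    (hpair : IsDistinguishedPair K w a θ)
    (hβ : w (θ - a) ≤ w (θ - β)) :
    (∀ σ : M ≃ₐ[K] M, w (θ - ((σ ⟨a, haM⟩ : M) : L)) ≤ w (θ - ((σ ⟨β, hβM⟩ : M) : L))) ∧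
      (minpoly K β).natDegree • w ((aeval θ) (minpoly K a))
        ≤ (minpoly K a).natDegree • w ((aeval θ) (minpoly K β)) := by
  classical
  haveI : Algebra.IsAlgebraic K L := IsAlgClosure.isAlgebraic
  obtain ⟨hdeg, hgreat, -⟩ := hpair
  have haint : IsIntegral K a := (Algebra.IsAlgebraic.isAlgebraic a).isIntegral
  have part1 : ∀ σ : M ≃ₐ[K] M,
      w (θ - ((σ ⟨a, haM⟩ : M) : L)) ≤ w (θ - ((σ ⟨β, hβM⟩ : M) : L)) := by
    intro σ
    set σa : L := ((σ ⟨a, haM⟩ : M) : L) with hσa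
    set σβ : L := ((σ ⟨β, hβM⟩ : M) : L) with hσβ
    set σθ : L := ((σ ⟨θ, hθM⟩ : M) : L) with hσθ
    -- σa is a conjugate of a, hence has the same degree
    have hminaM : minpoly K a = minpoly K (⟨a, haM⟩ : M) := by
      have h := minpoly.algebraMap_eq (A := K) (algebraMap M L).injective (⟨a, haM⟩ : M)
      have h0 : (algebraMap M L) (⟨a, haM⟩ : M) = a := rfl
      rw [h0] at h
      exact h
    have hroota : aeval σa (minpoly K a) = 0 := by
      rw [hminaM]
      have h2 : aeval (σ ⟨a, haM⟩) (minpoly K (⟨a, haM⟩ : M)) = 0 := by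
        rw [aeval_algHom_apply σ _ _, minpoly.aeval, map_zero]
      have h3 := aeval_algebraMap_apply L (σ ⟨a, haM⟩) (minpoly K (⟨a, haM⟩ : M))
      rw [h2, map_zero] at h3
      exact h3
    have hminσa : minpoly K a = minpoly K σa :=
      minpoly.eq_of_irreducible_of_monic (minpoly.irreducible haint) hroota
        (minpoly.monic haint)
    have hdegσa : degK K σa < degK K θ := by
      show (minpoly K σa).natDegree < (minpoly K θ).natDegree
      rw [← hminσa]
      exact hdeg
    have hub : w (θ - σa) ≤ w (θ - a) := hgreat.2 ⟨σa, hdegσa, rfl⟩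
    -- invariance of differences
    have hwθβ : w (σθ - σβ) = w (θ - β) := by
      have h1 : σθ - σβ = (((σ (⟨θ, hθM⟩ - ⟨β, hβM⟩) : M)) : L) := by
        rw [map_sub]
        push_cast
        ring
    
      rw [h1, w_galois_invariant w M σ _]
      norm_cast
    have hwθa : w (σθ - σa) = w (θ - a) := by
      have h1 : σθ - σa = (((σ (⟨θ, hθM⟩ - ⟨a, haM⟩) : M)) : L) := by
        rw [map_sub]
        push_cast
        ring
      rw [h1, w_galois_invariant w M σ _]
      norm_cast
    by_cases hcase : w (θ - a) ≤ w (θ - σβ)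
    · exact le_trans hub hcase
    · push_neg at hcase
      have h2 : w (θ - σβ) < w (σθ - σβ) := by
        rw [hwθβ]
        exact lt_of_lt_of_le hcase hβ
      have h3 : w (θ - σθ) = w (θ - σβ) := by
        have hid : θ - σθ = (θ - σβ) + -(σθ - σβ) := by ring
        rw [hid, dv_add_eq_left w (by rw [w.map_neg]; exact h2)]
      have h4 : w (θ - σa) = w (θ - σθ) := by
        have hid : θ - σa = (θ - σθ) + (σθ - σa) := by ring
        rw [hid, dv_add_eq_left w ?_]
        rw [h3, hwθa]
        exact hcase
      rw [h4, h3]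
  refine ⟨part1, ?_⟩
  obtain ⟨s, hspos, hsn, hsum_a⟩ := sum_w_conj w M θ ⟨a, haM⟩
  obtain ⟨t, htpos, htm, hsum_b⟩ := sum_w_conj w M θ ⟨β, hβM⟩
  have hca : (((⟨a, haM⟩ : M) : M) : L) = a := rfl
  have hcb : (((⟨β, hβM⟩ : M) : M) : L) = β := rfl
  rw [hca] at hsn hsum_a
  rw [hcb] at htm hsum_b
  have hsum_le : (∑ σ : M ≃ₐ[K] M, w (θ - ((σ ⟨a, haM⟩ : M) : L)))
      ≤ ∑ σ : M ≃ₐ[K] M, w (θ - ((σ ⟨β, hβM⟩ : M) : L)) :=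
    Finset.sum_le_sum fun σ _ => part1 σ
  rw [hsum_a, hsum_b] at hsum_le
  set n : ℕ := (minpoly K a).natDegree with hn
  set m : ℕ := (minpoly K β).natDegree with hm
  set N : ℕ := Fintype.card (M ≃ₐ[K] M) with hN
  have h5 := nsmul_le_nsmul_right hsum_le (n * m)
  rw [smul_smul, smul_smul] at h5
  have e1 : n * m * s = N * m := by rw [← hsn]; ring
  have e2 : n * m * t = N * n := by rw [← htm]; ring
  rw [e1, e2, mul_smul, mul_smul] at h5
  have hNpos : 0 < N := Fintype.card_pos
  exact wt_nsmul_le_cancel hNpos h5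
end
end

section
/- Let (K,v) be a henselian valued field and θ ∈ K̄ \ K. A sequence [α₀, α₁, …, α_r] of elements of K̄ with 1 = deg_K(α₀) < ⋯ < deg_K(α_r) < deg_K(θ) is a complete distinguished chain for θ if and only if it is a complete Okutsu sequence for θ. -/
open Polynomial

noncomputable section

variable {K L Γ : Type*} [Field K] [Field L] [Algebra K L] [IsAlgClosure K L]
  [AddCommGroup Γ] [LinearOrder Γ] [IsOrderedAddMonoid Γ]

/-- `[α 0, …, α r]` is a *complete Okutsu sequence* for `θ = α (r+1)`. -/
def IsCompleteOkutsuSeq (K : Type*) [Field K] {L Γ : Type*} [Field L] [Algebra K L]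
    [AddCommGroup Γ] [LinearOrder Γ] [IsOrderedAddMonoid Γ] (w : AddValuation L (WithTop Γ))
    (r : ℕ) (α : ℕ → L) (θ : L) : Prop :=
  α (r + 1) = θ ∧ degK K (α 0) = 1 ∧
  (∀ i ≤ r, degK K (α i) < degK K (α (i + 1))) ∧
  ∀ i ≤ r, ∀ β : L,
    (degK K β < degK K (α (i + 1)) → w (θ - β) ≤ w (θ - α i)) ∧
    (degK K β < degK K (α i) → w (θ - β) < w (θ - α i))

/-- `[α 0, …, α r]` is a *complete distinguished chain* for `θ = α (r+1)`. -/
def IsCompleteDistinguishedChain (K : Type*) [Field K] {L Γ : Type*} [Field L] [Algebra K L]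
    [AddCommGroup Γ] [LinearOrder Γ] [IsOrderedAddMonoid Γ] (w : AddValuation L (WithTop Γ))
    (r : ℕ) (α : ℕ → L) (θ : L) : Prop :=
  α (r + 1) = θ ∧ degK K (α 0) = 1 ∧
  (∀ i ≤ r, degK K (α i) < degK K (α (i + 1))) ∧
  ∀ i ≤ r, IsDistinguishedPair K w (α i) (α (i + 1))


/-- A nonzero element has finite additive valuation. -/
lemma AddValuation.ne_top_of_ne_zero {Γ : Type*} [AddCommGroup Γ] [LinearOrder Γ] [IsOrderedAddMonoid Γ] {F : Type*}
    [Field F] (w : AddValuation F (WithTop Γ)) {x : F} (hx : x ≠ 0) : w x ≠ ⊤ := by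
  intro h
  have h1 : w (x * x⁻¹) = w x + w x⁻¹ := w.map_mul x x⁻¹
  rw [mul_inv_cancel₀ hx, w.map_one, h, top_add] at h1
  simp at h1

/-- Elements with distinct degrees over `K` are distinct. -/
lemma ne_of_degK_lt {K : Type*} [Field K] {L : Type*} [Field L] [Algebra K L] {x y : L}
    (h : degK K x < degK K y) : x ≠ y := fun hxy => by subst hxy; exact lt_irrefl _ h

/-- complete distinguished chains = complete Okutsu sequences. -/
theorem completeDistinguishedChain_iff_completeOkutsuSeq (w : AddValuation L (WithTop Γ))
    [HenselianLocalRing (AddValuation.integersVSR (w.comap (algebraMap K L)))]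
    (r : ℕ) (α : ℕ → L) (θ : L) (hθ : θ ∉ Set.range (algebraMap K L)) :
    IsCompleteDistinguishedChain K w r α θ ↔ IsCompleteOkutsuSeq K w r α θ := by
  constructor
  · -- chain → Okutsu
    rintro ⟨hα, h0, hdeg, hch⟩
    refine ⟨hα, h0, hdeg, ?_⟩
    -- strict growth of v(α(i+1) - α i)
    have hinc : ∀ i, i < r → w (α (i + 1) - α i) < w (α (i + 1 + 1) - α (i + 1)) := by
      intro i hi
      have hpair := hch (i + 1) hi
      have h1 : w (α (i + 1 + 1) - α i) < w (α (i + 1 + 1) - α (i + 1)) :=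
        hpair.2.2 (α i) (hdeg i (le_of_lt hi))
      have h2 : α (i + 1) - α i = (α (i + 1 + 1) - α i) - (α (i + 1 + 1) - α (i + 1)) := by ring
      rw [h2, AddValuation.map_sub_eq_of_lt_left w h1]
      exact h1
    -- v(θ - α i) = v(α(i+1) - α i), by downward induction
    have hval : ∀ j, ∀ i ≤ r, r - i = j → w (θ - α i) = w (α (i + 1) - α i) := by
      intro j
      induction j with
      | zero =>
        intro i hi hj
        have : i = r := le_antisymm hi (by omega)
        subst this
        rw [hα]
      | succ j ih =>
        intro i hi hj
        have hilt : i < r := by omega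
        have hnext : w (θ - α (i + 1)) = w (α (i + 1 + 1) - α (i + 1)) :=
          ih (i + 1) hilt (by omega)
        have hgt : w (α (i + 1) - α i) < w (θ - α (i + 1)) := by
          rw [hnext]; exact hinc i hilt
        have h2 : θ - α i = (α (i + 1) - α i) + (θ - α (i + 1)) := by ring
        rw [h2, AddValuation.map_add_eq_of_lt_left w hgt]
    -- v(α(i+1) - α i) < v(θ - α(i+1)) for every i ≤ r
    have hgt : ∀ i ≤ r, w (α (i + 1) - α i) < w (θ - α (i + 1)) := by
      intro i hi
      rcases eq_or_lt_of_le hi with rfl | hlt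
      · rw [hα, sub_self, AddValuation.map_zero]
        have hne : θ - α i ≠ 0 := sub_ne_zero.mpr (ne_of_degK_lt (hα ▸ hdeg i hi)).symm
        exact lt_top_iff_ne_top.mpr (AddValuation.ne_top_of_ne_zero w hne)
      · rw [hval (r - (i + 1)) (i + 1) hlt rfl]
        exact hinc i hlt
    intro i hi β
    have hvi : w (θ - α i) = w (α (i + 1) - α i) := hval (r - i) i hi rfl
    constructor
    · intro hβ
      have hub : w (α (i + 1) - β) ≤ w (α (i + 1) - α i) :=
        (hch i hi).2.1.2 ⟨β, hβ, rfl⟩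
      have hlt2 : w (α (i + 1) - β) < w (θ - α (i + 1)) := lt_of_le_of_lt hub (hgt i hi)
      have h2 : θ - β = (α (i + 1) - β) + (θ - α (i + 1)) := by ring
      rw [h2, AddValuation.map_add_eq_of_lt_left w hlt2, hvi]
      exact hub
    · intro hβ
      have hub : w (α (i + 1) - β) < w (α (i + 1) - α i) := (hch i hi).2.2 β hβ
      have hlt2 : w (α (i + 1) - β) < w (θ - α (i + 1)) := lt_trans hub (hgt i hi)
      have h2 : θ - β = (α (i + 1) - β) + (θ - α (i + 1)) := by ring
      rw [h2, AddValuation.map_add_eq_of_lt_left w hlt2, hvi]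
      exact hub
  · -- Okutsu → chain
    rintro ⟨hα, h0, hdeg, hOk⟩
    refine ⟨hα, h0, hdeg, ?_⟩
    -- strict growth of v(θ - α i)
    have hlt : ∀ i ≤ r, w (θ - α i) < w (θ - α (i + 1)) := by
      intro i hi
      rcases eq_or_lt_of_le hi with rfl | hilt
      · rw [hα, sub_self, AddValuation.map_zero]
        have hne : θ - α i ≠ 0 := sub_ne_zero.mpr (ne_of_degK_lt (hα ▸ hdeg i hi)).symm
        exact lt_top_iff_ne_top.mpr (AddValuation.ne_top_of_ne_zero w hne)
      · exact (hOk (i + 1) hilt (α i)).2 (hdeg i hi)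
    intro i hi
    have hEq : ∀ β : L, degK K β < degK K (α (i + 1)) → w (α (i + 1) - β) = w (θ - β) := by
      intro β hβ
      have h1 : w (θ - β) ≤ w (θ - α i) := (hOk i hi β).1 hβ
      have h2 : w (θ - β) < w (θ - α (i + 1)) := lt_of_le_of_lt h1 (hlt i hi)
      have h3 : α (i + 1) - β = (θ - β) - (θ - α (i + 1)) := by ring
      rw [h3, AddValuation.map_sub_eq_of_lt_left w h2]
    refine ⟨hdeg i hi, ⟨⟨α i, hdeg i hi, ?_⟩, ?_⟩, ?_⟩
    · rfl
    · rintro x ⟨β, hβ, rfl⟩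
      rw [hEq β hβ, hEq (α i) (hdeg i hi)]
      exact (hOk i hi β).1 hβ
    · intro β hβ
      have hβ' : degK K β < degK K (α (i + 1)) := lt_trans hβ (hdeg i hi)
      rw [hEq β hβ', hEq (α i) (hdeg i hi)]
      exact (hOk i hi β).2 hβ
end
end

section
/- Let (K,v) be a henselian valued field and [α₀, …, α_r] a complete Okutsu sequence for θ = α_{r+1}. Then for every 1 ≤ i < r, the truncated sequence [α₀, …, α_i] is a complete Okutsu sequence for α_{i+1}. -/
open Polynomial

noncomputable section

variable {K L Γ : Type*} [Field K] [Field L] [Algebra K L] [IsAlgClosure K L]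
  [AddCommGroup Γ] [LinearOrder Γ] [IsOrderedAddMonoid Γ]

/-- truncations of complete Okutsu sequences are complete Okutsu sequences. -/
theorem completeOkutsuSeq_truncation (w : AddValuation L (WithTop Γ))
    [HenselianLocalRing (AddValuation.integersVSR (w.comap (algebraMap K L)))]
    (r : ℕ) (α : ℕ → L) (θ : L) (h : IsCompleteOkutsuSeq K w r α θ) :
    ∀ i, 1 ≤ i → i < r → IsCompleteOkutsuSeq K w i α (α (i + 1)) := by
  obtain ⟨hθ, h0, hdeg, hmain⟩ := h
  intro i hi1 hir
  have hir' : i + 1 ≤ r := hir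
  refine ⟨rfl, h0, fun j hj => hdeg j (hj.trans hir.le), ?_⟩
  have mono : ∀ k, k ≤ r → ∀ j, j ≤ k → degK K (α j) < degK K (α (k + 1)) := by
    intro k
    induction' k with k ih
    · intro hk j hj
      interval_cases j
      exact hdeg 0 hk
    · intro hk j hj
      rcases Nat.eq_or_lt_of_le hj with h' | h'
      · exact h' ▸ hdeg (k + 1) hk
      · exact (ih (by omega) j (by omega)).trans (hdeg (k + 1) hk)
  have hkey : ∀ x : L, w (θ - x) < w (θ - α (i + 1)) →
      w (α (i + 1) - x) = w (θ - x) := by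
    intro x hx
    have he : α (i + 1) - x = (θ - x) - (θ - α (i + 1)) := by ring
    rw [he, AddValuation.map_sub_eq_of_lt_left _ hx]
  intro j hj β
  have hjr : j ≤ r := hj.trans hir.le
  have hαj : w (θ - α j) < w (θ - α (i + 1)) :=
    (hmain (i + 1) hir' (α j)).2 (mono i (by omega) j hj)
  have hkeyj : w (α (i + 1) - α j) = w (θ - α j) := hkey _ hαj
  constructor
  · intro hβ
    have hle : w (θ - β) ≤ w (θ - α j) := (hmain j hjr β).1 hβ
    rw [hkeyj, hkey β (lt_of_le_of_lt hle hαj)]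
    exact hle
  · intro hβ
    have hlt' : w (θ - β) < w (θ - α j) := (hmain j hjr β).2 hβ
    rw [hkeyj, hkey β (hlt'.trans hαj)]
    exact hlt'
end
end
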